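/- Let ω be a weight on ℕ². Then ω is an admissible weight if and only if every ω-bounded semicharacter χ on ℕ² satisfies |χ(m,n)| ≤ 1 for all (m,n) ∈ ℕ² (equivalently, the set of ω-bounded semicharacters coincides with the set of bounded semicharacters on ℕ²). -/

import Mathlib

open Complex Filter Topology

noncomputable section

/-- The `i`-th prime (`0`-indexed: `nthPrime 0 = 2`), as a positive natural number. -/
def nthPrime (i : ℕ) : ℕ+ := ⟨Nat.nth Nat.Prime i, (Nat.prime_nth_prime i).pos⟩

/-- A weight on `ℕ² = ℕ+ × ℕ+`: takes values in `[1,∞)` and is submultiplicative. -/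
def IsWeight (ω : ℕ+ × ℕ+ → ℝ) : Prop :=
  (∀ mn : ℕ+ × ℕ+, 1 ≤ ω mn) ∧
    ∀ m₁ n₁ m₂ n₂ : ℕ+, ω (m₁ * m₂, n₁ * n₂) ≤ ω (m₁, n₁) * ω (m₂, n₂)

/-- A weight is admissible if `ω(lⁿ,kⁿ)^{1/n} → 1` for all `(l,k)`. -/
def Admissible (ω : ℕ+ × ℕ+ → ℝ) : Prop :=
  ∀ l k : ℕ+, Tendsto (fun n : ℕ => ω (l ^ n, k ^ n) ^ ((1 : ℝ) / n)) atTop (nhds 1)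

/-- A weight is almost monotone if it is admissible, or there is `K > 0` with
`ω(m₁,n₁) ≤ K ω(m₂,n₂)` whenever `m₁ ∣ m₂` or `n₁ ∣ n₂`. -/
def AlmostMonotone (ω : ℕ+ × ℕ+ → ℝ) : Prop :=
  Admissible ω ∨ ∃ K : ℝ, 0 < K ∧ ∀ m₁ n₁ m₂ n₂ : ℕ+,
    ((m₁ : ℕ) ∣ (m₂ : ℕ) ∨ (n₁ : ℕ) ∣ (n₂ : ℕ)) → ω (m₁, n₁) ≤ K * ω (m₂, n₂)

/-- A semicharacter on `ℕ² = ℕ+ × ℕ+`: a nonzero multiplicative map into `ℂ`. -/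
def IsSemicharacter (χ : ℕ+ × ℕ+ → ℂ) : Prop :=
  χ ≠ 0 ∧ ∀ m₁ n₁ m₂ n₂ : ℕ+, χ (m₁ * m₂, n₁ * n₂) = χ (m₁, n₁) * χ (m₂, n₂)

/-- A map `χ` is `ω`-bounded if `|χ(m,n)| ≤ ω(m,n)` for all `(m,n)`. -/
def OmegaBounded (ω : ℕ+ × ℕ+ → ℝ) (χ : ℕ+ × ℕ+ → ℂ) : Prop :=
  ∀ mn : ℕ+ × ℕ+, ‖χ mn‖ ≤ ω mn

/-- `ρᵢ = lim_n ω(pᵢⁿ,1)^{1/n} = inf_n ω(pᵢⁿ,1)^{1/n}`. -/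
def rho (ω : ℕ+ × ℕ+ → ℝ) (i : ℕ) : ℝ :=
  ⨅ n : ℕ+, ω (nthPrime i ^ (n : ℕ), 1) ^ ((1 : ℝ) / ((n : ℕ) : ℝ))

/-- `μᵢ = lim_n ω(1,pᵢⁿ)^{1/n} = inf_n ω(1,pᵢⁿ)^{1/n}`. -/
def mu (ω : ℕ+ × ℕ+ → ℝ) (i : ℕ) : ℝ :=
  ⨅ n : ℕ+, ω (1, nthPrime i ^ (n : ℕ)) ^ ((1 : ℝ) / ((n : ℕ) : ℝ))

def useq (ω : ℕ+ × ℕ+ → ℝ) (l k : ℕ+) : ℕ → ℝ := fun n => Real.log (ω (l ^ n, k ^ n))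

lemma wpos {ω : ℕ+ × ℕ+ → ℝ} (hω : IsWeight ω) (mn : ℕ+ × ℕ+) : 0 < ω mn :=
  lt_of_lt_of_le one_pos (hω.1 mn)

lemma useq_subadd {ω : ℕ+ × ℕ+ → ℝ} (hω : IsWeight ω) (l k : ℕ+) :
    Subadditive (useq ω l k) := by
  intro a b
  have h1 : ω (l ^ (a + b), k ^ (a + b)) ≤ ω (l ^ a, k ^ a) * ω (l ^ b, k ^ b) := by
    rw [pow_add, pow_add]; exact hω.2 _ _ _ _
  calc Real.log (ω (l ^ (a+b), k ^ (a+b))) ≤ Real.log (ω (l ^ a, k ^ a) * ω (l ^ b, k ^ b)) :=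
        Real.log_le_log (wpos hω _) h1
    _ = _ := Real.log_mul (wpos hω _).ne' (wpos hω _).ne'

lemma useq_nonneg {ω : ℕ+ × ℕ+ → ℝ} (hω : IsWeight ω) (l k : ℕ+) (n : ℕ) :
    0 ≤ useq ω l k n := Real.log_nonneg (hω.1 _)

lemma useq_bdd {ω : ℕ+ × ℕ+ → ℝ} (hω : IsWeight ω) (l k : ℕ+) :
    BddBelow (Set.range fun n : ℕ => useq ω l k n / n) := by
  refine ⟨0, fun x hx => ?_⟩
  obtain ⟨n, rfl⟩ := hx
  exact div_nonneg (useq_nonneg hω l k n) (Nat.cast_nonneg n)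

lemma lim_nonneg {ω : ℕ+ × ℕ+ → ℝ} (hω : IsWeight ω) (l k : ℕ+) :
    0 ≤ (useq_subadd hω l k).lim :=
  ge_of_tendsto' ((useq_subadd hω l k).tendsto_lim (useq_bdd hω l k))
    (fun n => div_nonneg (useq_nonneg hω l k n) (Nat.cast_nonneg n))

lemma tendsto_rpow_lim {ω : ℕ+ × ℕ+ → ℝ} (hω : IsWeight ω) (l k : ℕ+) :
    Tendsto (fun n : ℕ => ω (l ^ n, k ^ n) ^ ((1 : ℝ) / n)) atTop
      (𝓝 (Real.exp (useq_subadd hω l k).lim)) := by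
  have h1 := (Real.continuous_exp.tendsto _).comp
    ((useq_subadd hω l k).tendsto_lim (useq_bdd hω l k))
  refine h1.congr fun n => ?_
  show Real.exp (useq ω l k n / n) = _
  rw [Real.rpow_def_of_pos (wpos hω _), useq, mul_one_div]

lemma lim_mul_le {ω : ℕ+ × ℕ+ → ℝ} (hω : IsWeight ω) {l k l₁ k₁ l₂ k₂ : ℕ+}
    (hl : l = l₁ * l₂) (hk : k = k₁ * k₂) :
    (useq_subadd hω l k).lim ≤ (useq_subadd hω l₁ k₁).lim + (useq_subadd hω l₂ k₂).lim := by
  refine le_of_tendsto_of_tendsto'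
    ((useq_subadd hω l k).tendsto_lim (useq_bdd hω l k))
    (((useq_subadd hω l₁ k₁).tendsto_lim (useq_bdd hω l₁ k₁)).add
      ((useq_subadd hω l₂ k₂).tendsto_lim (useq_bdd hω l₂ k₂))) (fun n => ?_)
  rcases Nat.eq_zero_or_pos n with rfl | hn
  · simp
  have key : useq ω l k n ≤ useq ω l₁ k₁ n + useq ω l₂ k₂ n := by
    have h1 : ω (l ^ n, k ^ n) ≤ ω (l₁ ^ n, k₁ ^ n) * ω (l₂ ^ n, k₂ ^ n) := by
      rw [hl, hk, mul_pow, mul_pow]; exact hω.2 _ _ _ _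
    calc Real.log (ω (l ^ n, k ^ n)) ≤ _ := Real.log_le_log (wpos hω _) h1
      _ = _ := Real.log_mul (wpos hω _).ne' (wpos hω _).ne'
  rw [← add_div]
  exact div_le_div_of_nonneg_right key (by exact_mod_cast hn.le)

lemma lim_one_one {ω : ℕ+ × ℕ+ → ℝ} (hω : IsWeight ω) :
    (useq_subadd hω 1 1).lim = 0 := by
  refine tendsto_nhds_unique ((useq_subadd hω 1 1).tendsto_lim (useq_bdd hω 1 1)) ?_
  have : (fun n : ℕ => useq ω 1 1 n / n) = fun n : ℕ => Real.log (ω (1, 1)) / n := by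
    funext n; simp [useq]
  rw [this]
  exact tendsto_const_div_atTop_nhds_zero_nat _

open Classical in
def chi (p : ℕ+) (r : ℝ) : ℕ+ × ℕ+ → ℂ := fun mn =>
  if (∀ q : ℕ, q.Prime → q ∣ (mn.1 : ℕ) → q = (p : ℕ)) ∧ mn.2 = 1 then
    ((r : ℂ)) ^ ((mn.1 : ℕ).factorization (p : ℕ)) else 0

lemma chi_pos (p : ℕ+) (r : ℝ) (mn : ℕ+ × ℕ+)
    (h : (∀ q : ℕ, q.Prime → q ∣ (mn.1 : ℕ) → q = (p : ℕ)) ∧ mn.2 = 1) :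
    chi p r mn = ((r : ℂ)) ^ ((mn.1 : ℕ).factorization (p : ℕ)) := by
  unfold chi; exact if_pos h

lemma chi_neg (p : ℕ+) (r : ℝ) (mn : ℕ+ × ℕ+)
    (h : ¬ ((∀ q : ℕ, q.Prime → q ∣ (mn.1 : ℕ) → q = (p : ℕ)) ∧ mn.2 = 1)) :
    chi p r mn = 0 := by
  unfold chi; exact if_neg h

lemma prime_lim_le {ω : ℕ+ × ℕ+ → ℝ} (hω : IsWeight ω)
    (hb : ∀ χ : ℕ+ × ℕ+ → ℂ, IsSemicharacter χ → OmegaBounded ω χ →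
      ∀ mn : ℕ+ × ℕ+, ‖χ mn‖ ≤ 1)
    (p : ℕ+) (hp : (p : ℕ).Prime) : (useq_subadd hω p 1).lim ≤ 0 := by
  classical
  set L := (useq_subadd hω p 1).lim with hL
  set r := Real.exp L with hrdef
  have hr0 : 0 < r := Real.exp_pos L
  have hre : ∀ e : ℕ, r ^ e ≤ ω (p ^ e, 1) := by
    intro e
    rcases Nat.eq_zero_or_pos e with rfl | he
    · simpa using hω.1 (1, 1)
    have h1 : L ≤ useq ω p 1 e / e :=
      (useq_subadd hω p 1).lim_le_div (useq_bdd hω p 1) he.ne'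
    have h2 : (e : ℝ) * L ≤ useq ω p 1 e := by
      rw [le_div_iff₀ (by exact_mod_cast he : (0:ℝ) < e)] at h1
      linarith [h1]
    calc r ^ e = Real.exp ((e : ℝ) * L) := by rw [Real.exp_nat_mul]
      _ ≤ Real.exp (useq ω p 1 e) := Real.exp_le_exp.mpr h2
      _ = ω (p ^ e, 1 ^ e) := Real.exp_log (wpos hω _)
      _ = ω (p ^ e, 1) := by rw [one_pow]
  have hχ11 : chi p r (1, 1) = 1 := by
    rw [chi_pos p r (1, 1) ⟨fun q hq hdvd =>
      absurd (Nat.eq_one_of_dvd_one (by simpa using hdvd)) hq.one_lt.ne', rfl⟩]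
    simp
  have hsemi : chi p r ≠ 0 ∧ ∀ m₁ n₁ m₂ n₂ : ℕ+,
      chi p r (m₁ * m₂, n₁ * n₂) = chi p r (m₁, n₁) * chi p r (m₂, n₂) := by
    constructor
    · intro h
      have := congrFun h (1, 1)
      rw [hχ11] at this
      simpa using this
    · intro m₁ n₁ m₂ n₂
      by_cases h1 : (∀ q : ℕ, q.Prime → q ∣ (m₁ : ℕ) → q = (p : ℕ)) ∧ n₁ = 1
      · by_cases h2 : (∀ q : ℕ, q.Prime → q ∣ (m₂ : ℕ) → q = (p : ℕ)) ∧ n₂ = 1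
        · have hd : ∀ q : ℕ, q.Prime → q ∣ ((m₁ * m₂ : ℕ+) : ℕ) → q = (p : ℕ) := by
            intro q hq hdvd
            rw [PNat.mul_coe] at hdvd
            rcases (Nat.Prime.dvd_mul hq).mp hdvd with h | h
            · exact h1.1 q hq h
            · exact h2.1 q hq h
          have hn : n₁ * n₂ = 1 := by rw [h1.2, h2.2, mul_one]
          rw [chi_pos p r (m₁ * m₂, n₁ * n₂) ⟨hd, hn⟩, chi_pos p r (m₁, n₁) h1, chi_pos p r (m₂, n₂) h2]
          have hfac : ((m₁ * m₂ : ℕ+) : ℕ).factorization (p : ℕ) =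
              (m₁ : ℕ).factorization (p : ℕ) + (m₂ : ℕ).factorization (p : ℕ) := by
            rw [PNat.mul_coe, Nat.factorization_mul m₁.ne_zero m₂.ne_zero]
            simp
          rw [hfac, pow_add]
        · have hcond : ¬ ((∀ q : ℕ, q.Prime → q ∣ ((m₁ * m₂ : ℕ+) : ℕ) → q = (p : ℕ)) ∧
              n₁ * n₂ = 1) := by
            intro hc
            refine h2 ⟨fun q hq hdvd => hc.1 q hq ?_, ?_⟩
            · rw [PNat.mul_coe]; exact hdvd.mul_left _
            · have h3 : (n₁ : ℕ) * (n₂ : ℕ) = 1 := by exact_mod_cast hc.2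
              exact PNat.coe_injective (Nat.eq_one_of_mul_eq_one_left h3)
          rw [chi_neg p r (m₁ * m₂, n₁ * n₂) hcond, chi_neg p r (m₂, n₂) h2, mul_zero]
      · have hcond : ¬ ((∀ q : ℕ, q.Prime → q ∣ ((m₁ * m₂ : ℕ+) : ℕ) → q = (p : ℕ)) ∧
            n₁ * n₂ = 1) := by
          intro hc
          refine h1 ⟨fun q hq hdvd => hc.1 q hq ?_, ?_⟩
          · rw [PNat.mul_coe]; exact hdvd.mul_right _
          · have h3 : (n₁ : ℕ) * (n₂ : ℕ) = 1 := by exact_mod_cast hc.2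
            exact PNat.coe_injective (Nat.eq_one_of_mul_eq_one_right h3)
        rw [chi_neg p r (m₁ * m₂, n₁ * n₂) hcond, chi_neg p r (m₁, n₁) h1, zero_mul]
  have hob : ∀ mn : ℕ+ × ℕ+, ‖chi p r mn‖ ≤ ω mn := by
    rintro ⟨m, n⟩
    by_cases h : (∀ q : ℕ, q.Prime → q ∣ (m : ℕ) → q = (p : ℕ)) ∧ n = 1
    · obtain ⟨hP, hn1⟩ := h
      obtain ⟨t, ht⟩ : ∃ t : ℕ, (m : ℕ) = (p : ℕ) ^ t :=
        ⟨_, Nat.eq_prime_pow_of_unique_prime_dvd m.ne_zero (fun hd hdvd => hP _ hd hdvd)⟩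
      have hmp : m = p ^ t := by
        apply PNat.coe_injective; rw [PNat.pow_coe]; exact ht
      have hfac : (m : ℕ).factorization (p : ℕ) = t := by
        rw [ht, hp.factorization_pow, Finsupp.single_eq_same]
      rw [chi_pos p r (m, n) ⟨hP, hn1⟩]
      show ‖(r : ℂ) ^ ((m : ℕ).factorization (p : ℕ))‖ ≤ ω (m, n)
      rw [hfac, norm_pow, Complex.norm_real, Real.norm_of_nonneg hr0.le, hn1, hmp]
      exact hre t
    · rw [chi_neg p r (m, n) h]
      simpa using le_trans zero_le_one (hω.1 (m, n))
  have hkey := hb (chi p r) hsemi hob (p, 1)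
  have hχp : chi p r (p, 1) = (r : ℂ) := by
    rw [chi_pos p r (p, 1) ⟨fun q hq hdvd => (Nat.prime_dvd_prime_iff_eq hq hp).mp hdvd, rfl⟩]
    show (r : ℂ) ^ ((p : ℕ).factorization (p : ℕ)) = (r : ℂ)
    rw [Nat.Prime.factorization_self hp, pow_one]
  rw [hχp, Complex.norm_real, Real.norm_of_nonneg hr0.le] at hkey
  rwa [hrdef, Real.exp_le_one_iff] at hkey


lemma fst_lim_le {ω : ℕ+ × ℕ+ → ℝ} (hω : IsWeight ω)
    (hb : ∀ χ : ℕ+ × ℕ+ → ℂ, IsSemicharacter χ → OmegaBounded ω χ →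
      ∀ mn : ℕ+ × ℕ+, ‖χ mn‖ ≤ 1) :
    ∀ l : ℕ+, (useq_subadd hω l 1).lim ≤ 0 := by
  intro l
  induction l using PNat.strongInductionOn with
  | _ l ih =>
    by_cases hl1 : l = 1
    · subst hl1; exact (lim_one_one hω).le
    · have hlnat : (l : ℕ) ≠ 1 := fun h => hl1 (PNat.coe_injective h)
      have hqp : ((l : ℕ).minFac).Prime := Nat.minFac_prime hlnat
      obtain ⟨t, ht⟩ := (l : ℕ).minFac_dvd
      have ht0 : 0 < t := by
        rcases Nat.eq_zero_or_pos t with rfl | h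
        · rw [mul_zero] at ht
          exact absurd ht l.ne_zero
        · exact h
      set P : ℕ+ := ⟨(l : ℕ).minFac, hqp.pos⟩ with hP
      set T : ℕ+ := ⟨t, ht0⟩ with hT
      have hlPT : l = P * T := by
        apply PNat.coe_injective
        rw [PNat.mul_coe]
        exact ht
      have hTlt : T < l := by
        have h1 : (T : ℕ) < (l : ℕ) := by
          rw [ht]
          exact (Nat.lt_mul_iff_one_lt_left ht0).mpr hqp.one_lt
        exact_mod_cast h1
      have h1 := prime_lim_le hω hb P hqp
      have h2 := ih T hTlt
      calc (useq_subadd hω l 1).lim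
          ≤ (useq_subadd hω P 1).lim + (useq_subadd hω T 1).lim :=
            lim_mul_le hω hlPT (mul_one 1).symm
        _ ≤ 0 := by linarith

/-- a weight `ω` on `ℕ²` is admissible iff every `ω`-bounded semicharacter is
bounded (by `1`) everywhere. -/
theorem stmt9 (ω : ℕ+ × ℕ+ → ℝ) (hω : IsWeight ω) :
    Admissible ω ↔ ∀ χ : ℕ+ × ℕ+ → ℂ, IsSemicharacter χ → OmegaBounded ω χ →
      ∀ mn : ℕ+ × ℕ+, ‖χ mn‖ ≤ 1 := by
  constructor
  · -- admissible implies every ω-bounded semicharacter is bounded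
    rintro hadm χ hχ hob ⟨m, n⟩
    have hpow : ∀ j : ℕ, χ (m ^ (j + 1), n ^ (j + 1)) = χ (m, n) ^ (j + 1) := by
      intro j
      induction j with
      | zero => simp
      | succ j ih =>
        have h := hχ.2 (m ^ (j + 1)) (n ^ (j + 1)) m n
        rw [← pow_succ, ← pow_succ] at h
        rw [h, ih, ← pow_succ]
    have key : ∀ j : ℕ, ‖χ (m, n)‖ ≤
        ω (m ^ (j + 1), n ^ (j + 1)) ^ ((1 : ℝ) / ((j : ℕ) + 1 : ℕ)) := by
      intro j
      have h0 : (0 : ℝ) ≤ ‖χ (m, n)‖ := norm_nonneg _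
      have hle : ‖χ (m, n)‖ ^ (j + 1) ≤ ω (m ^ (j + 1), n ^ (j + 1)) := by
        rw [← norm_pow, ← hpow j]
        exact hob _
      have h2 := Real.rpow_le_rpow (pow_nonneg h0 _) hle
        (by positivity : (0 : ℝ) ≤ (((j : ℕ) + 1 : ℕ) : ℝ)⁻¹)
      rwa [Real.pow_rpow_inv_natCast h0 (Nat.succ_ne_zero j), ← one_div] at h2
    refine ge_of_tendsto (hadm m n) ?_
    filter_upwards [eventually_gt_atTop 0] with j hj
    obtain ⟨i, rfl⟩ := Nat.exists_eq_add_of_lt hj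
    simpa using key i
  · -- conversely
    intro hb l k
    have hfst : (useq_subadd hω l 1).lim ≤ 0 := fst_lim_le hω hb l
    -- transfer to the second coordinate by swapping
    have hω2 : IsWeight (fun mn : ℕ+ × ℕ+ => ω (mn.2, mn.1)) :=
      ⟨fun mn => hω.1 _, fun a b c d => hω.2 b a d c⟩
    have hb2 : ∀ χ : ℕ+ × ℕ+ → ℂ, IsSemicharacter χ →
        OmegaBounded (fun mn : ℕ+ × ℕ+ => ω (mn.2, mn.1)) χ →
        ∀ mn : ℕ+ × ℕ+, ‖χ mn‖ ≤ 1 := by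
      intro χ hχ hobd mn
      have hχ2 : IsSemicharacter (fun mn : ℕ+ × ℕ+ => χ (mn.2, mn.1)) := by
        constructor
        · intro h
          apply hχ.1
          funext ab
          have := congrFun h (ab.2, ab.1)
          simpa using this
        · intro a b c d
          exact hχ.2 b a d c
      have hobd2 : OmegaBounded ω (fun mn : ℕ+ × ℕ+ => χ (mn.2, mn.1)) :=
        fun ab => hobd (ab.2, ab.1)
      have := hb _ hχ2 hobd2 (mn.2, mn.1)
      simpa using this
    have hsnd : (useq_subadd hω 1 k).lim ≤ 0 := fst_lim_le hω2 hb2 k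
    have hle : (useq_subadd hω l k).lim ≤ 0 := by
      calc (useq_subadd hω l k).lim
          ≤ (useq_subadd hω l 1).lim + (useq_subadd hω 1 k).lim :=
            lim_mul_le hω (mul_one l).symm (one_mul k).symm
        _ ≤ 0 := by linarith
    have hlim : (useq_subadd hω l k).lim = 0 := le_antisymm hle (lim_nonneg hω l k)
    have := tendsto_rpow_lim hω l k
    rwa [hlim, Real.exp_zero] at this
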